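/- In dimensionless variables, for 0 < ε² + w̄/m̃² ≤ 1 with r̃₊/m̃ = 1 + √(1 - ε² - w̄/m̃²), the ratio m̃_H/m̃ = (r̃₊/m̃)²/[(r̃₊/m̃)² + w̄/m̃²]² · {(r̃₊/m̃)² - w̄/m̃² - (r̃₊/m̃)ε²} satisfies m̃_H/m̃ ≤ 1, with equality if and only if w̄ = 0 and ε = 0; moreover m̃_H = 0 at the extremal configuration ε² + w̄/m̃² = 1. -/

import Mathlib

theorem komar_mass_ratio_antiscreening (m wbar ε : ℝ) (hm : 0 < m) (hw : 0 ≤ wbar)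
    (hle : ε ^ 2 + wbar / m ^ 2 ≤ 1)
    (x ratio : ℝ)
    (hx : x = 1 + Real.sqrt (1 - ε ^ 2 - wbar / m ^ 2))
    (hratio : ratio =
      x ^ 2 * (x ^ 2 - wbar / m ^ 2 - x * ε ^ 2) / (x ^ 2 + wbar / m ^ 2) ^ 2) :
    ratio ≤ 1 ∧ (ratio = 1 ↔ wbar = 0 ∧ ε = 0) ∧
    (ε ^ 2 + wbar / m ^ 2 = 1 → ratio = 0) := by
  set w := wbar / m ^ 2 with hwdef
  have hm2 : (0:ℝ) < m ^ 2 := by positivity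
  have hw0 : 0 ≤ w := div_nonneg hw hm2.le
  have harg : 0 ≤ 1 - ε ^ 2 - w := by nlinarith
  have hs0 : 0 ≤ Real.sqrt (1 - ε ^ 2 - w) := Real.sqrt_nonneg _
  have hs : (Real.sqrt (1 - ε ^ 2 - w)) ^ 2 = 1 - ε ^ 2 - w := Real.sq_sqrt harg
  have hx1 : 1 ≤ x := by rw [hx]; linarith
  have hxs : (x - 1) ^ 2 = 1 - ε ^ 2 - w := by rw [hx]; simpa using hs
  have hden : (0:ℝ) < (x ^ 2 + w) ^ 2 := by positivity
  have key : x ^ 2 * (x ^ 2 - w - x * ε ^ 2) ≤ (x ^ 2 + w) ^ 2 := by nlinarith [sq_nonneg ε, sq_nonneg w, mul_nonneg (mul_nonneg hw0 hw0) (by linarith : (0:ℝ) ≤ x), mul_nonneg hw0 (sq_nonneg x), mul_nonneg (sq_nonneg ε) (pow_pos (by linarith : (0:ℝ) < x) 3).le]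
  refine ⟨?_, ⟨?_, ?_⟩, ?_⟩
  · rw [hratio]
    exact div_le_one_of_le₀ key (le_of_lt hden)
  · intro h1
    rw [hratio] at h1
    have heq : x ^ 2 * (x ^ 2 - w - x * ε ^ 2) = (x ^ 2 + w) ^ 2 := by
      field_simp at h1; linarith
    have hx3 : (0:ℝ) < x ^ 3 := by positivity
    have hsum : x ^ 3 * ε ^ 2 + 3 * w * x ^ 2 + w ^ 2 = 0 := by linear_combination -heq
    have t1 : 0 ≤ x ^ 3 * ε ^ 2 := mul_nonneg hx3.le (sq_nonneg ε)
    have t2 : 0 ≤ 3 * w * x ^ 2 := mul_nonneg (by linarith) (sq_nonneg x)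
    have t3 : 0 ≤ w ^ 2 := sq_nonneg w
    have hε2 : x ^ 3 * ε ^ 2 = 0 := by linarith
    have hεz : ε = 0 := by
      have := (mul_eq_zero.mp hε2).resolve_left (ne_of_gt hx3)
      exact pow_eq_zero_iff (n := 2) (by norm_num) |>.mp this
    have hw2 : w ^ 2 = 0 := by linarith
    have hwz : w = 0 := pow_eq_zero_iff (n := 2) (by norm_num) |>.mp hw2
    refine ⟨?_, hεz⟩
    have : wbar = w * m ^ 2 := by rw [hwdef, div_mul_cancel₀ _ hm2.ne']
    rw [this, hwz, zero_mul]
  · rintro ⟨hwb, hεz⟩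
    have hwz : w = 0 := by rw [hwdef, hwb, zero_div]
    rw [hratio, hwz, hεz]
    have hx0 : x ≠ 0 := by linarith
    field_simp
    ring
  · intro hext
    have hxe : x = 1 := by
      rw [hx]
      have : 1 - ε ^ 2 - w = 0 := by linarith
      rw [this, Real.sqrt_zero]; ring
    rw [hratio, hxe]
    have : (1:ℝ) ^ 2 - w - 1 * ε ^ 2 = 0 := by linarith
    rw [this, mul_zero, zero_div]
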